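/- Let X be a compact metric space and f_1, f_2 : X → X homeomorphisms. Let q_1, …, q_r be fixed points of f_1 with pairwise disjoint open neighborhoods b_1, …, b_r satisfying cl(b_i) ⊆ f_1(b_i) and ⋂_{k≥0} f_1^{-k}(b_i) = {q_i}, and let q'_1, …, q'_r be fixed points of f_2 with pairwise disjoint open neighborhoods b'_1, …, b'_r satisfying cl(b'_i) ⊆ f_2(b'_i) and ⋂_{k≥0} f_2^{-k}(b'_i) = {q'_i}. Suppose h : X ∖ {q_1, …, q_r} → X ∖ {q'_1, …, q'_r} is a homeomorphism with h(f_1(x)) = f_2(h(x)) for all x ≠ q_1, …, q_r, and h(b_i ∖ {q_i}) = b'_i ∖ {q'_i} for every i. Then the map H : X → X defined by H(q_i) = q'_i and H(x) = h(x) otherwise is a homeomorphism of X satisfying H ∘ f_1 = f_2 ∘ H. -/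

import Mathlib

open Filter Topology Set

lemma trap_preimage_closure {X : Type*} [TopologicalSpace X]
    (f : X ≃ₜ X) (b : Set X) (hexp : closure b ⊆ ⇑f '' b) (k : ℕ) :
    closure ((⇑f)^[k+1] ⁻¹' b) ⊆ (⇑f)^[k] ⁻¹' b := by
  have h1 : closure (⇑f ⁻¹' b) ⊆ b := by
    refine subset_trans (f.continuous.closure_preimage_subset b) ?_
    intro x hx
    obtain ⟨y, hy, hxy⟩ := hexp hx
    rwa [← f.injective hxy]
  rw [Function.iterate_succ', Set.preimage_comp]
  calc closure ((⇑f)^[k] ⁻¹' (⇑f ⁻¹' b))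
      ⊆ (⇑f)^[k] ⁻¹' closure (⇑f ⁻¹' b) :=
        (f.continuous.iterate k).closure_preimage_subset _
    _ ⊆ (⇑f)^[k] ⁻¹' b := Set.preimage_mono h1

lemma trap_basis {X : Type*} [TopologicalSpace X] [CompactSpace X] [T2Space X]
    (f : X ≃ₜ X) (b : Set X) (q : X) (hq : q ∈ b) (hfix : f q = q)
    (hexp : closure b ⊆ ⇑f '' b)
    (hbasin : (⋂ k : ℕ, (⇑f)^[k] ⁻¹' b) = {q})
    {U : Set X} (hU : U ∈ 𝓝 q) :
    ∃ k, (⇑f)^[k] ⁻¹' b ⊆ U := by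
  set A : ℕ → Set X := fun k => (⇑f)^[k] ⁻¹' b with hA
  have hanti : Antitone (fun k => closure (A k)) := by
    apply antitone_nat_of_succ_le
    intro k
    exact subset_trans (trap_preimage_closure f b hexp k) subset_closure
  have hqA : ∀ k, q ∈ A k := fun k => by
    simp [hA, Function.iterate_fixed hfix, hq]
  have hiInter : (⋂ k, closure (A k)) = {q} := by
    apply Set.Subset.antisymm
    · rw [← hbasin]
      intro x hx
      refine Set.mem_iInter.mpr fun k => ?_
      exact trap_preimage_closure f b hexp k (Set.mem_iInter.mp hx (k+1))
    · intro x hx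
      rw [Set.mem_singleton_iff] at hx
      subst hx
      exact Set.mem_iInter.mpr fun k => subset_closure (hqA k)
  obtain ⟨k, hk⟩ := exists_subset_nhds_of_compactSpace
    (hanti.directed_ge) (fun k => isClosed_closure)
    (fun x hx => by rw [hiInter] at hx; rwa [hx])
  exact ⟨k, subset_trans subset_closure hk⟩

theorem conjugacy_off_sources_extends_to_global_conjugacy
    {X : Type*} [MetricSpace X] [CompactSpace X]
    (f₁ f₂ : X ≃ₜ X) (r : ℕ)
    (q q' : Fin r → X) (b b' : Fin r → Set X)
    (hfix₁ : ∀ i, f₁ (q i) = q i) (hfix₂ : ∀ i, f₂ (q' i) = q' i)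
    (hbopen : ∀ i, IsOpen (b i)) (hb'open : ∀ i, IsOpen (b' i))
    (hqb : ∀ i, q i ∈ b i) (hq'b' : ∀ i, q' i ∈ b' i)
    (hbdisj : ∀ i i', i ≠ i' → Disjoint (b i) (b i'))
    (hb'disj : ∀ i i', i ≠ i' → Disjoint (b' i) (b' i'))
    (hexp₁ : ∀ i, closure (b i) ⊆ ⇑f₁ '' b i)
    (hexp₂ : ∀ i, closure (b' i) ⊆ ⇑f₂ '' b' i)
    (hbasin₁ : ∀ i, (⋂ k : ℕ, (⇑f₁)^[k] ⁻¹' b i) = {q i})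
    (hbasin₂ : ∀ i, (⋂ k : ℕ, (⇑f₂)^[k] ⁻¹' b' i) = {q' i})
    (h : PartialHomeomorph X X)
    (hsrc : h.source = (Set.range q)ᶜ) (htgt : h.target = (Set.range q')ᶜ)
    (hconj : ∀ x ∉ Set.range q, h (f₁ x) = f₂ (h x))
    (hballs : ∀ i, ⇑h '' (b i \ {q i}) = b' i \ {q' i}) :
    ∃ H : X ≃ₜ X,
      (∀ i, H (q i) = q' i) ∧
      (∀ x ∉ Set.range q, H x = h x) ∧
      (∀ x, H (f₁ x) = f₂ (H x)) := by
  classical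
  -- injectivity of q and q'
  have hqinj : Function.Injective q := by
    intro i j hij
    by_contra hne
    exact Set.disjoint_left.mp (hbdisj i j hne) (hqb i) (hij ▸ hqb j)
  have hq'inj : Function.Injective q' := by
    intro i j hij
    by_contra hne
    exact Set.disjoint_left.mp (hb'disj i j hne) (hq'b' i) (hij ▸ hq'b' j)
  -- points of b i other than q i avoid all fixed points
  have hnr : ∀ i x, x ∈ b i → x ≠ q i → x ∉ Set.range q := by
    rintro i x hxb hxq ⟨j, rfl⟩
    rcases eq_or_ne j i with rfl | hji
    · exact hxq rfl
    · exact Set.disjoint_left.mp (hbdisj j i hji) (hqb j) hxb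
  have hnr' : ∀ i y, y ∈ b' i → y ≠ q' i → y ∉ Set.range q' := by
    rintro i y hyb hyq ⟨j, rfl⟩
    rcases eq_or_ne j i with rfl | hji
    · exact hyq rfl
    · exact Set.disjoint_left.mp (hb'disj j i hji) (hq'b' j) hyb
  -- fixed points are preserved by f₁ on the nose
  have hfq : ∀ x, f₁ x ∈ Set.range q → x ∈ Set.range q := by
    rintro x ⟨j, hj⟩
    exact ⟨j, f₁.injective (by rw [hfix₁ j, hj])⟩
  -- the trapping sequences
  set A : Fin r → ℕ → Set X := fun i k => (⇑f₁)^[k] ⁻¹' b i with hAdef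
  set A' : Fin r → ℕ → Set X := fun i k => (⇑f₂)^[k] ⁻¹' b' i with hA'def
  have hAanti : ∀ i k, A i (k+1) ⊆ A i k := fun i k =>
    subset_trans subset_closure (trap_preimage_closure f₁ (b i) (hexp₁ i) k)
  have hA'anti : ∀ i k, A' i (k+1) ⊆ A' i k := fun i k =>
    subset_trans subset_closure (trap_preimage_closure f₂ (b' i) (hexp₂ i) k)
  have hAsub : ∀ i k, A i k ⊆ b i := by
    intro i k
    induction k with
    | zero => exact subset_rfl
    | succ n ih => exact subset_trans (hAanti i n) ih
  have hA'sub : ∀ i k, A' i k ⊆ b' i := by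
    intro i k
    induction k with
    | zero => exact subset_rfl
    | succ n ih => exact subset_trans (hA'anti i n) ih
  have hmemA : ∀ i k x, x ∈ A i (k+1) ↔ f₁ x ∈ A i k := by
    intro i k x
    simp only [hAdef, Set.mem_preimage, Function.iterate_succ_apply]
  have hmemA' : ∀ i k y, y ∈ A' i (k+1) ↔ f₂ y ∈ A' i k := by
    intro i k y
    simp only [hA'def, Set.mem_preimage, Function.iterate_succ_apply]
  -- key induction: h matches the punctured trapping sequences
  have himg : ∀ i k, ⇑h '' (A i k \ {q i}) = A' i k \ {q' i} := by
    intro i k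
    induction k with
    | zero => exact hballs i
    | succ n ih =>
      apply Set.Subset.antisymm
      · rintro y ⟨x, ⟨hxA, hxq⟩, rfl⟩
        rw [Set.mem_singleton_iff] at hxq
        have hxnr : x ∉ Set.range q := hnr i x (hAsub i (n+1) hxA) hxq
        have hfxA : f₁ x ∈ A i n := (hmemA i n x).mp hxA
        have hfxq : f₁ x ≠ q i := fun hc =>
          hxq (f₁.injective (by rw [hc, hfix₁ i]))
        have : h (f₁ x) ∈ A' i n \ {q' i} := by
          rw [← ih]; exact ⟨f₁ x, ⟨hfxA, hfxq⟩, rfl⟩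
        rw [hconj x hxnr] at this
        constructor
        · exact (hmemA' i n (h x)).mpr this.1
        · have : h x ∈ h.target := h.map_source (by rw [hsrc]; exact hxnr)
          rw [htgt] at this
          exact fun hc => this ⟨i, (Set.mem_singleton_iff.mp hc).symm⟩
      · rintro y ⟨hyA, hyq⟩
        rw [Set.mem_singleton_iff] at hyq
        have hynr : y ∉ Set.range q' := hnr' i y (hA'sub i (n+1) hyA) hyq
        have hyt : y ∈ h.target := by rw [htgt]; exact hynr
        set z := h.symm y with hz
        have hzs : z ∈ h.source := h.map_target hyt
        have hzy : h z = y := h.right_inv hyt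
        have hznr : z ∉ Set.range q := by rw [hsrc] at hzs; exact hzs
        have hfyA : f₂ y ∈ A' i n := (hmemA' i n y).mp hyA
        have hfyq : f₂ y ≠ q' i := fun hc =>
          hyq (f₂.injective (by rw [hc, hfix₂ i]))
        obtain ⟨x, ⟨hxA, hxq⟩, hxy⟩ : f₂ y ∈ ⇑h '' (A i n \ {q i}) := by
          rw [ih]; exact ⟨hfyA, hfyq⟩
        rw [Set.mem_singleton_iff] at hxq
        have hxnr : x ∉ Set.range q := hnr i x (hAsub i n hxA) hxq
        have hfznr : f₁ z ∉ Set.range q := fun hc => hznr (hfq z hc)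
        have heq : h (f₁ z) = h x := by
          rw [hconj z hznr, hzy, hxy]
        have hfzx : f₁ z = x := by
          apply h.injOn _ _ heq
          · rw [hsrc]; exact hfznr
          · rw [hsrc]; exact hxnr
        refine ⟨z, ⟨(hmemA i n z).mpr (hfzx ▸ hxA), ?_⟩, hzy⟩
        exact fun hc => hznr ⟨i, (Set.mem_singleton_iff.mp hc).symm⟩
  -- definition of the extension
  set H : X → X := fun x =>
    if hx : x ∈ Set.range q then q' hx.choose else h x with hHdef
  have hHq : ∀ i, H (q i) = q' i := by
    intro i
    have hx : q i ∈ Set.range q := ⟨i, rfl⟩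
    simp only [hHdef, dif_pos hx]
    exact congrArg q' (hqinj hx.choose_spec)
  have hHnot : ∀ x ∉ Set.range q, H x = h x := by
    intro x hx
    simp only [hHdef, dif_neg hx]
  -- H maps into the right places
  have hHtgt : ∀ x ∉ Set.range q, H x ∉ Set.range q' := by
    intro x hx
    rw [hHnot x hx]
    have : h x ∈ h.target := h.map_source (by rw [hsrc]; exact hx)
    rwa [htgt] at this
  -- conjugacy
  have hHconj : ∀ x, H (f₁ x) = f₂ (H x) := by
    intro x
    by_cases hx : x ∈ Set.range q
    · obtain ⟨i, rfl⟩ := hx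
      rw [hfix₁ i, hHq i]
      exact (hfix₂ i).symm
    · have hfx : f₁ x ∉ Set.range q := fun hc => hx (hfq x hc)
      rw [hHnot _ hfx, hHnot _ hx, hconj x hx]
  -- bijectivity
  have hHbij : Function.Bijective H := by
    constructor
    · intro x y hxy
      by_cases hx : x ∈ Set.range q <;> by_cases hy : y ∈ Set.range q
      · obtain ⟨i, rfl⟩ := hx; obtain ⟨j, rfl⟩ := hy
        rw [hHq, hHq] at hxy
        exact congrArg q (hq'inj hxy)
      · obtain ⟨i, rfl⟩ := hx
        exact absurd (hxy ▸ ⟨i, (hHq i).symm⟩) (hHtgt y hy)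
      · obtain ⟨j, rfl⟩ := hy
        exact absurd (hxy ▸ ⟨j, (hHq j).symm⟩) (hHtgt x hx)
      · rw [hHnot x hx, hHnot y hy] at hxy
        exact h.injOn (by rw [hsrc]; exact hx) (by rw [hsrc]; exact hy) hxy
    · intro y
      by_cases hy : y ∈ Set.range q'
      · obtain ⟨i, rfl⟩ := hy
        exact ⟨q i, hHq i⟩
      · have hyt : y ∈ h.target := by rw [htgt]; exact hy
        have hzs : h.symm y ∈ h.source := h.map_target hyt
        have hznr : h.symm y ∉ Set.range q := by rw [hsrc] at hzs; exact hzs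
        exact ⟨h.symm y, by rw [hHnot _ hznr, h.right_inv hyt]⟩
  -- continuity
  have hHcont : Continuous H := by
    rw [continuous_iff_continuousAt]
    intro x
    by_cases hx : x ∈ Set.range q
    · obtain ⟨i, rfl⟩ := hx
      unfold ContinuousAt
      rw [hHq i, Filter.tendsto_def]
      intro U hU
      obtain ⟨k, hk⟩ := trap_basis f₂ (b' i) (q' i) (hq'b' i) (hfix₂ i)
        (hexp₂ i) (hbasin₂ i) hU
      have hAnhds : A i k ∈ 𝓝 (q i) := by
        refine IsOpen.mem_nhds ?_ ?_
        · exact (hbopen i).preimage (f₁.continuous.iterate k)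
        · simp [hAdef, Function.iterate_fixed (hfix₁ i), hqb i]
      refine Filter.mem_of_superset hAnhds ?_
      intro z hz
      by_cases hzq : z = q i
      · subst hzq
        rw [Set.mem_preimage, hHq i]
        refine hk ?_
        simp [hA'def, Function.iterate_fixed (hfix₂ i), hq'b' i]
      · have hznr : z ∉ Set.range q := hnr i z (hAsub i k hz) hzq
        rw [Set.mem_preimage, hHnot z hznr]
        have : h z ∈ A' i k \ {q' i} := by
          rw [← himg i k]; exact ⟨z, ⟨hz, hzq⟩, rfl⟩
        exact hk this.1
    · have hopen : IsOpen (Set.range q)ᶜ :=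
        (Set.finite_range q).isClosed.isOpen_compl
      have hxs : x ∈ h.source := by rw [hsrc]; exact hx
      refine ContinuousAt.congr (h.continuousOn.continuousAt (by rw [hsrc]; exact hopen.mem_nhds hx)) ?_
      filter_upwards [hopen.mem_nhds hx] with z hz
      exact (hHnot z hz).symm
  -- assemble
  refine ⟨(Continuous.homeoOfEquivCompactToT2
      (f := Equiv.ofBijective H hHbij) hHcont), ?_, ?_, ?_⟩
  · exact hHq
  · exact hHnot
  · exact hHconj
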